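/- For a simplicial complex K, the spectral gaps satisfy λ_min(L_d^{down}) = λ_min(L_{d-1}^{up}) = min{ 1/R_γ(K) : γ ∈ im ∂_d, ‖γ‖ = 1 }, where R_γ(K) = γ^T (L_{d-1}^{up})^+ γ is the effective resistance. -/

import Mathlib

open Matrix

/-- An abstract simplicial complex on vertex set `V`: a finite, downward-closed
family of nonempty finite subsets of `V`. -/
structure SComplex (V : Type) where
  faces : Finset (Finset V)
  down_closed : ∀ s ∈ faces, ∀ t ⊆ s, t.Nonempty → t ∈ faces

/-- The index type of `d`-dimensional simplices (i.e. `(d+1)`-element subsets) on `V`. -/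
abbrev SimpIdx (V : Type) (d : ℕ) := {s : Finset V // s.card = d + 1}

variable {V : Type} [Fintype V] [LinearOrder V]

/-- The signed incidence coefficient of the boundary operator: for `τ ⊆ σ` of
codimension one it is `(-1)ⁱ` where `i` is the position of the removed vertex. -/
def bsign (τ σ : Finset V) : ℤ :=
  if τ ⊆ σ ∧ τ.card + 1 = σ.card then
    (-1 : ℤ) ^ (σ.filter (fun w => ∃ v ∈ σ \ τ, w < v)).card
  else 0

/-- The global integral boundary matrix `∂_{d+1}` from `(d+1)`-dimensional to
`d`-dimensional simplices on the vertex set `V`. -/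
def gbdryZ (V : Type) [Fintype V] [LinearOrder V] (d : ℕ) :
    Matrix (SimpIdx V d) (SimpIdx V (d + 1)) ℤ :=
  fun τ σ => bsign (τ : Finset V) (σ : Finset V)

/-- The global real boundary matrix. -/
noncomputable def gbdry (V : Type) [Fintype V] [LinearOrder V] (d : ℕ) :
    Matrix (SimpIdx V d) (SimpIdx V (d + 1)) ℝ :=
  (gbdryZ V d).map (fun z => (z : ℝ))

/-- Diagonal 0/1 matrix indicating membership of simplices in the complex `K`. -/
noncomputable def SComplex.ind (K : SComplex V) (d : ℕ) :
    Matrix (SimpIdx V d) (SimpIdx V d) ℝ :=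
  Matrix.diagonal fun σ => if (σ : Finset V) ∈ K.faces then (1 : ℝ) else 0

/-- The boundary matrix `∂_{d+1}[K]` of the complex `K` (rows and columns outside
`K` are zero). -/
noncomputable def SComplex.bdry (K : SComplex V) (d : ℕ) :
    Matrix (SimpIdx V d) (SimpIdx V (d + 1)) ℝ :=
  K.ind d * gbdry V d * K.ind (d + 1)

/-- A chain is supported on the complex `K`. -/
def SComplex.supportedOn (K : SComplex V) {d : ℕ} (f : SimpIdx V d → ℝ) : Prop :=
  ∀ σ : SimpIdx V d, f σ ≠ 0 → (σ : Finset V) ∈ K.faces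

/-- A `d`-dimensional chain is a cycle (its boundary vanishes; every `0`-chain is a cycle). -/
def IsCycle (V : Type) [Fintype V] [LinearOrder V] : (d : ℕ) → (SimpIdx V d → ℝ) → Prop
  | 0, _ => True
  | (d + 1), γ => gbdry V d *ᵥ γ = 0

/-- A `d`-dimensional cycle `γ` is null-homologous in `K` iff it is the boundary of a
`(d+1)`-chain of `K` (a unit `γ`-flow). -/
def SComplex.NullHomologous (K : SComplex V) (d : ℕ) (γ : SimpIdx V d → ℝ) : Prop :=
  ∃ f : SimpIdx V (d + 1) → ℝ, K.supportedOn f ∧ gbdry V d *ᵥ f = γ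

/-- The weighted effective resistance of `γ` in `K`: the infimum of flow energies
`∑ f(σ)²/w(σ)` over unit `γ`-flows `f` in `K`. -/
noncomputable def SComplex.effResW (K : SComplex V) (d : ℕ)
    (w : SimpIdx V (d + 1) → ℝ) (γ : SimpIdx V d → ℝ) : ℝ :=
  sInf {E : ℝ | ∃ f : SimpIdx V (d + 1) → ℝ, K.supportedOn f ∧ gbdry V d *ᵥ f = γ ∧
    E = ∑ σ : SimpIdx V (d + 1), f σ ^ 2 / w σ}

/-- Unweighted effective resistance. -/
noncomputable def SComplex.effRes (K : SComplex V) (d : ℕ) (γ : SimpIdx V d → ℝ) : ℝ :=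
  K.effResW d (fun _ => 1) γ

/-- The weighted up-Laplacian `L^{up,W} = ∂ W ∂ᵀ` of `K` acting on `d`-chains. -/
noncomputable def SComplex.upLapW (K : SComplex V) (d : ℕ) (w : SimpIdx V (d + 1) → ℝ) :
    Matrix (SimpIdx V d) (SimpIdx V d) ℝ :=
  K.bdry d * Matrix.diagonal w * (K.bdry d)ᵀ

/-- The (unweighted) up-Laplacian `L^{up} = ∂ ∂ᵀ` of `K` acting on `d`-chains. -/
noncomputable def SComplex.upLap (K : SComplex V) (d : ℕ) :
    Matrix (SimpIdx V d) (SimpIdx V d) ℝ :=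
  K.bdry d * (K.bdry d)ᵀ

/-- The down-Laplacian `L^{down} = ∂ᵀ ∂` of `K` acting on `d`-chains (zero on `0`-chains). -/
noncomputable def SComplex.downLap (K : SComplex V) :
    (d : ℕ) → Matrix (SimpIdx V d) (SimpIdx V d) ℝ
  | 0 => 0
  | (d + 1) => (K.bdry d)ᵀ * K.bdry d

/-- The combinatorial Laplacian `L = L^{up} + L^{down}`. -/
noncomputable def SComplex.combLap (K : SComplex V) (d : ℕ) :
    Matrix (SimpIdx V d) (SimpIdx V d) ℝ :=
  K.upLap d + K.downLap d

/-- `X` is the Moore–Penrose pseudoinverse of `A` (the four Penrose conditions). -/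
def IsMoorePenrose {m n : Type} [Fintype m] [Fintype n]
    (A : Matrix m n ℝ) (X : Matrix n m ℝ) : Prop :=
  A * X * A = A ∧ X * A * X = X ∧ (A * X)ᵀ = A * X ∧ (X * A)ᵀ = X * A

/-- `μ` is an eigenvalue of the real matrix `M`. -/
def IsEigen {n : Type} [Fintype n] (M : Matrix n n ℝ) (μ : ℝ) : Prop :=
  ∃ x : n → ℝ, x ≠ 0 ∧ M *ᵥ x = μ • x

/-- The spectral gap of `M`: the infimum of its nonzero (real) eigenvalues. -/
noncomputable def specGap {n : Type} [Fintype n] (M : Matrix n n ℝ) : ℝ :=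
  sInf {μ : ℝ | μ ≠ 0 ∧ IsEigen M μ}

/-- The number of `d`-dimensional simplices of `K`. -/
def nface (K : SComplex V) (d : ℕ) : ℕ :=
  (K.faces.filter fun s => s.card = d + 1).card

/-- The weighted effective capacitance of `γ` for `L ⊆ K`: the infimum of potential
energies `‖δ[K] p‖²_W` over unit `γ`-potentials `p` of `L`. -/
noncomputable def SComplex.effCapW (K L : SComplex V) (d : ℕ)
    (w : SimpIdx V (d + 1) → ℝ) (γ : SimpIdx V d → ℝ) : ℝ :=
  sInf {E : ℝ | ∃ p : SimpIdx V d → ℝ, L.supportedOn p ∧ (L.bdry d)ᵀ *ᵥ p = 0 ∧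
    p ⬝ᵥ γ = 1 ∧ E = ∑ σ : SimpIdx V (d + 1), ((K.bdry d)ᵀ *ᵥ p) σ ^ 2 * w σ}

/-- Unweighted effective capacitance. -/
noncomputable def SComplex.effCap (K L : SComplex V) (d : ℕ) (γ : SimpIdx V d → ℝ) : ℝ :=
  K.effCapW L d (fun _ => 1) γ

/-- The relative integral boundary matrix `∂[L, L₀]`: entries are kept only for
simplices of `L` not in `L₀`. -/
def relBdryZ (L L₀ : SComplex V) (d : ℕ) :
    Matrix (SimpIdx V d) (SimpIdx V (d + 1)) ℤ :=
  fun τ σ => if (τ : Finset V) ∈ L.faces ∧ (τ : Finset V) ∉ L₀.faces ∧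
      (σ : Finset V) ∈ L.faces ∧ (σ : Finset V) ∉ L₀.faces then
    bsign (τ : Finset V) (σ : Finset V) else 0

/-- Kernel of the relative boundary map out of relative `d`-chains. -/
noncomputable def relKer (L L₀ : SComplex V) : (d : ℕ) → Submodule ℤ (SimpIdx V d → ℤ)
  | 0 => ⊤
  | (d + 1) => LinearMap.ker (Matrix.toLin' (relBdryZ L L₀ d))

/-- The cardinality of the torsion subgroup of the relative homology group
`H_d(L, L₀; ℤ)`. -/
noncomputable def relTorsionCard (L L₀ : SComplex V) (d : ℕ) : ℕ :=
  Nat.card (Submodule.torsion ℤ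
    (↥(relKer L L₀ d) ⧸ Submodule.comap (relKer L L₀ d).subtype
      (LinearMap.range (Matrix.toLin' (relBdryZ L L₀ d)))))

section AuxSpectral

variable {n m : Type} [Fintype n] [Fintype m]

lemma aux_mulVec_dot (M : Matrix n m ℝ) (x : m → ℝ) (y : n → ℝ) :
    (M *ᵥ x) ⬝ᵥ y = x ⬝ᵥ (Mᵀ *ᵥ y) := by
  rw [Matrix.dotProduct_mulVec, Matrix.vecMul_transpose]

lemma aux_dot_self_nonneg (x : n → ℝ) : 0 ≤ x ⬝ᵥ x :=
  Finset.sum_nonneg fun i _ => mul_self_nonneg _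

lemma aux_eigen_transfer (A : Matrix n m ℝ) {μ : ℝ} (hμ : μ ≠ 0)
    (h : IsEigen (Aᵀ * A) μ) : IsEigen (A * Aᵀ) μ := by
  obtain ⟨x, hx, hxe⟩ := h
  refine ⟨A *ᵥ x, ?_, ?_⟩
  · intro h0
    apply hx
    have h1 : (Aᵀ * A) *ᵥ x = 0 := by rw [← Matrix.mulVec_mulVec, h0, Matrix.mulVec_zero]
    rw [hxe] at h1
    rcases smul_eq_zero.mp h1 with h | h
    · exact absurd h hμ
    · exact h
  · rw [← Matrix.mulVec_mulVec, Matrix.mulVec_mulVec x Aᵀ A, hxe, Matrix.mulVec_smul]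

lemma aux_central {n m : Type} [Fintype n] [DecidableEq n] [Fintype m]
    (A : Matrix n m ℝ) (X : Matrix n n ℝ) (hX : IsMoorePenrose (A * Aᵀ) X) :
    sInf {μ : ℝ | μ ≠ 0 ∧ IsEigen (A * Aᵀ) μ} =
      sInf {r : ℝ | ∃ γ : n → ℝ, (∃ f : m → ℝ, A *ᵥ f = γ) ∧
        γ ⬝ᵥ γ = (1 : ℝ) ∧ r = (γ ⬝ᵥ (X *ᵥ γ))⁻¹} := by
  obtain ⟨hP1, hP2, hP3, hP4⟩ := hX
  set L : Matrix n n ℝ := A * Aᵀ with hLdef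
  have hLsym : Lᵀ = L := by rw [hLdef, Matrix.transpose_mul, Matrix.transpose_transpose]
  have hL : L.IsHermitian := by
    rw [Matrix.IsHermitian, Matrix.conjTranspose_eq_transpose_of_trivial, hLsym]
  have hLdot : ∀ x y : n → ℝ, (L *ᵥ x) ⬝ᵥ y = x ⬝ᵥ (L *ᵥ y) := fun x y => by
    rw [aux_mulVec_dot, hLsym]
  have hLmul : ∀ x : n → ℝ, L *ᵥ x = A *ᵥ (Aᵀ *ᵥ x) := fun x => by
    rw [Matrix.mulVec_mulVec]
  have hLquad : ∀ x : n → ℝ, x ⬝ᵥ (L *ᵥ x) = (Aᵀ *ᵥ x) ⬝ᵥ (Aᵀ *ᵥ x) := fun x => by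
    rw [hLmul, dotProduct_comm, aux_mulVec_dot]
  have hLpos : ∀ x : n → ℝ, 0 ≤ x ⬝ᵥ (L *ᵥ x) := fun x => by
    rw [hLquad]; exact aux_dot_self_nonneg _
  have hLzero : ∀ x : n → ℝ, x ⬝ᵥ (L *ᵥ x) = 0 → Aᵀ *ᵥ x = 0 := fun x hx =>
    dotProduct_self_eq_zero.mp (by rw [← hLquad, hx])
  set B := hL.eigenvectorBasis with hBdef
  set ev := hL.eigenvalues with hevdef
  have hBv : ∀ i, L *ᵥ ⇑(B i) = ev i • ⇑(B i) := hL.mulVec_eigenvectorBasis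
  have hinner : ∀ x y : EuclideanSpace ℝ n, (inner ℝ x y : ℝ) = (x : n → ℝ) ⬝ᵥ (y : n → ℝ) :=
    fun x y => by
      simp [PiLp.inner_apply, dotProduct, RCLike.inner_apply, starRingEnd_apply, mul_comm]
  have hvv : ∀ i j, ⇑(B i) ⬝ᵥ ⇑(B j) = if i = j then (1 : ℝ) else 0 := fun i j => by
    rw [← hinner]
    exact orthonormal_iff_ite.mp B.orthonormal i j
  have hexp : ∀ x y : n → ℝ, x ⬝ᵥ y = ∑ i, (⇑(B i) ⬝ᵥ x) * (⇑(B i) ⬝ᵥ y) := fun x y => by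
    have h := B.sum_inner_mul_inner (WithLp.toLp 2 x : EuclideanSpace ℝ n) (WithLp.toLp 2 y : EuclideanSpace ℝ n)
    simp only [hinner, WithLp.ofLp_toLp] at h
    rw [← h]
    refine Finset.sum_congr rfl fun i _ => ?_
    rw [dotProduct_comm]
  have hBzero : ∀ x : n → ℝ, (∀ i, ⇑(B i) ⬝ᵥ x = 0) → x = 0 := fun x hx =>
    dotProduct_self_eq_zero.mp (by rw [hexp x x]; simp [hx])
  have heig : ∀ i (x : n → ℝ), ⇑(B i) ⬝ᵥ (L *ᵥ x) = ev i * (⇑(B i) ⬝ᵥ x) := fun i x => by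
    rw [← hLdot, hBv, smul_dotProduct, smul_eq_mul]
  have hevnn : ∀ i, 0 ≤ ev i := fun i => by
    have h := heig i (⇑(B i))
    rw [hvv i i, if_pos rfl, mul_one] at h
    rw [← h]; exact hLpos _
  by_cases hS : ∀ i : n, ev i = 0
  · have hL0 : ∀ x : n → ℝ, L *ᵥ x = 0 := fun x =>
      hBzero _ fun i => by rw [heig, hS i, zero_mul]
    have e1 : {μ : ℝ | μ ≠ 0 ∧ IsEigen L μ} = ∅ := by
      ext μ
      simp only [Set.mem_setOf_eq, Set.mem_empty_iff_false, iff_false, not_and]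
      rintro hμ ⟨x, hx, hxe⟩
      apply hx
      have h0 : μ • x = 0 := by rw [← hxe, hL0]
      rcases smul_eq_zero.mp h0 with h | h
      · exact absurd h hμ
      · exact h
    have e2 : {r : ℝ | ∃ γ : n → ℝ, (∃ f : m → ℝ, A *ᵥ f = γ) ∧
        γ ⬝ᵥ γ = (1 : ℝ) ∧ r = (γ ⬝ᵥ (X *ᵥ γ))⁻¹} = ∅ := by
      ext r
      simp only [Set.mem_setOf_eq, Set.mem_empty_iff_false, iff_false]
      rintro ⟨γ, ⟨f, hf⟩, hγ1, -⟩
      have hAt : Aᵀ *ᵥ γ = 0 := hLzero γ (by rw [hL0, dotProduct_zero])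
      rw [← hf, aux_mulVec_dot, hf, hAt, dotProduct_zero] at hγ1
      exact zero_ne_one hγ1
    rw [e1, e2]
  · push_neg at hS
    have hSne : (Finset.univ.filter (fun i => ev i ≠ 0)).Nonempty := by
      obtain ⟨i, hi⟩ := hS
      exact ⟨i, by simp [hi]⟩
    obtain ⟨i₀, hi₀, hmin⟩ :=
      (Finset.univ.filter (fun i => ev i ≠ 0)).exists_min_image ev hSne
    set lam := ev i₀ with hlamdef
    have hlam0 : lam ≠ 0 := by
      have := Finset.mem_filter.mp hi₀
      exact this.2
    have hlampos : 0 < lam := lt_of_le_of_ne (hevnn i₀) (Ne.symm hlam0)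
    have hminS : ∀ i, ev i ≠ 0 → lam ≤ ev i := fun i hi =>
      hmin i (Finset.mem_filter.mpr ⟨Finset.mem_univ i, hi⟩)
    have hBne : (⇑(B i₀) : n → ℝ) ≠ 0 := by
      intro h0
      have h := hvv i₀ i₀
      rw [h0, if_pos rfl, zero_dotProduct] at h
      exact zero_ne_one h
    have hLHS : IsLeast {μ : ℝ | μ ≠ 0 ∧ IsEigen L μ} lam := by
      constructor
      · exact ⟨hlam0, ⇑(B i₀), hBne, hBv i₀⟩
      · rintro μ ⟨hμ, x, hx, hxe⟩
        obtain ⟨i, hi⟩ : ∃ i, ⇑(B i) ⬝ᵥ x ≠ 0 := by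
          by_contra h
          push_neg at h
          exact hx (hBzero x h)
        have h1 : ev i * (⇑(B i) ⬝ᵥ x) = μ * (⇑(B i) ⬝ᵥ x) := by
          rw [← heig, hxe, dotProduct_smul, smul_eq_mul]
        have h2 : ev i = μ := mul_right_cancel₀ hi h1
        rw [← h2]
        exact hminS i (h2 ▸ hμ)
    have hRHS : IsLeast {r : ℝ | ∃ γ : n → ℝ, (∃ f : m → ℝ, A *ᵥ f = γ) ∧
        γ ⬝ᵥ γ = (1 : ℝ) ∧ r = (γ ⬝ᵥ (X *ᵥ γ))⁻¹} lam := by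
      constructor
      · have hz : (⇑(B i₀) : n → ℝ) = L *ᵥ (lam⁻¹ • ⇑(B i₀)) := by
          rw [Matrix.mulVec_smul, hBv, smul_smul, inv_mul_cancel₀ hlam0, one_smul]
        refine ⟨⇑(B i₀), ⟨Aᵀ *ᵥ (lam⁻¹ • ⇑(B i₀)), ?_⟩, ?_, ?_⟩
        · rw [Matrix.mulVec_mulVec, ← hLdef, ← hz]
        · rw [hvv i₀ i₀, if_pos rfl]
        · have hcomp : ⇑(B i₀) ⬝ᵥ (X *ᵥ ⇑(B i₀)) = lam⁻¹ := by
            conv_lhs => rw [hz]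
            rw [hLdot, Matrix.mulVec_mulVec, Matrix.mulVec_mulVec, hP1, ← hz,
              smul_dotProduct, hvv i₀ i₀, if_pos rfl, smul_eq_mul, mul_one]
          rw [hcomp, inv_inv]
      · rintro r ⟨γ, ⟨f, hf⟩, hγ1, hr⟩
        have hPmul : L * (L * X) = L := by
          calc L * (L * X) = ((L * X)ᵀ * Lᵀ)ᵀ := by
                rw [← Matrix.transpose_mul, Matrix.transpose_transpose]
            _ = ((L * X) * L)ᵀ := by rw [hP3, hLsym]
            _ = L := by rw [hP1, hLsym]
        have hPP : (L * X) * (L * X) = L * X := by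
          rw [← Matrix.mul_assoc, hP1]
        set w : n → ℝ := γ - (L * X) *ᵥ γ with hw
        have hLw : L *ᵥ w = 0 := by
          rw [hw, Matrix.mulVec_sub, Matrix.mulVec_mulVec, hPmul, sub_self]
        have hAtw : Aᵀ *ᵥ w = 0 := hLzero w (by rw [hLw, dotProduct_zero])
        have hwγ : w ⬝ᵥ γ = 0 := by
          rw [← hf, dotProduct_comm, aux_mulVec_dot, hAtw, dotProduct_zero]
        have hwP : w ⬝ᵥ ((L * X) *ᵥ γ) = 0 := by
          have haux := aux_mulVec_dot ((L * X)ᵀ) w γ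
          rw [Matrix.transpose_transpose] at haux
          rw [← haux, hP3]
          have hPw : (L * X) *ᵥ w = 0 := by
            rw [hw, Matrix.mulVec_sub, Matrix.mulVec_mulVec, hPP, sub_self]
          rw [hPw, zero_dotProduct]
        have hww : w ⬝ᵥ w = 0 := by
          rw [hw, dotProduct_sub, ← hw, hwγ, hwP, sub_zero]
        have hw0 : w = 0 := dotProduct_self_eq_zero.mp hww
        set z : n → ℝ := X *ᵥ γ with hzdef
        have hγL : γ = L *ᵥ z := by
          have h0 : γ = (L * X) *ᵥ γ := sub_eq_zero.mp (by rw [← hw]; exact hw0)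
          rw [hzdef, Matrix.mulVec_mulVec]
          exact h0
        have ht : γ ⬝ᵥ z = z ⬝ᵥ (L *ᵥ z) := by
          rw [dotProduct_comm]
          exact congrArg (fun t => z ⬝ᵥ t) hγL
        have htval : γ ⬝ᵥ z = ∑ i, ev i * (⇑(B i) ⬝ᵥ z) ^ 2 := by
          rw [ht, hexp z (L *ᵥ z)]
          refine Finset.sum_congr rfl fun i _ => ?_
          rw [heig]; ring
        have hsum1 : ∑ i, (ev i * (⇑(B i) ⬝ᵥ z)) ^ 2 = 1 := by
          calc ∑ i, (ev i * (⇑(B i) ⬝ᵥ z)) ^ 2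
              = ∑ i, (⇑(B i) ⬝ᵥ γ) * (⇑(B i) ⬝ᵥ γ) := by
                refine Finset.sum_congr rfl fun i _ => ?_
                have hc : ⇑(B i) ⬝ᵥ γ = ev i * (⇑(B i) ⬝ᵥ z) := by
                  conv_lhs => rw [hγL]
                  exact heig i z
                rw [hc]; ring
            _ = γ ⬝ᵥ γ := (hexp γ γ).symm
            _ = 1 := hγ1
        have htnn : 0 ≤ γ ⬝ᵥ z := by
          rw [htval]
          exact Finset.sum_nonneg fun i _ => mul_nonneg (hevnn i) (sq_nonneg _)
        have htpos : 0 < γ ⬝ᵥ z := by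
          rcases eq_or_lt_of_le htnn with h0 | h
          · exfalso
            have hz0 : ∀ i ∈ Finset.univ, ev i * (⇑(B i) ⬝ᵥ z) ^ 2 = 0 :=
              (Finset.sum_eq_zero_iff_of_nonneg
                (fun i _ => mul_nonneg (hevnn i) (sq_nonneg _))).mp (by rw [← htval, ← h0])
            have h10 : (1 : ℝ) = 0 := by
              rw [← hsum1]
              refine Finset.sum_eq_zero fun i hi => ?_
              have h := hz0 i hi
              calc (ev i * (⇑(B i) ⬝ᵥ z)) ^ 2 = ev i * (ev i * (⇑(B i) ⬝ᵥ z) ^ 2) := by ring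
                _ = 0 := by rw [h, mul_zero]
            exact one_ne_zero h10
          · exact h
        have hlb : lam * (γ ⬝ᵥ z) ≤ 1 := by
          rw [htval, Finset.mul_sum, ← hsum1]
          refine Finset.sum_le_sum fun i _ => ?_
          by_cases h : ev i = 0
          · simp [h]
          · calc lam * (ev i * (⇑(B i) ⬝ᵥ z) ^ 2)
                ≤ ev i * (ev i * (⇑(B i) ⬝ᵥ z) ^ 2) :=
                  mul_le_mul_of_nonneg_right (hminS i h)
                    (mul_nonneg (hevnn i) (sq_nonneg _))
              _ = (ev i * (⇑(B i) ⬝ᵥ z)) ^ 2 := by ring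
        rw [hr]
        calc lam = lam * (γ ⬝ᵥ z) * (γ ⬝ᵥ z)⁻¹ := by field_simp
          _ ≤ 1 * (γ ⬝ᵥ z)⁻¹ :=
            mul_le_mul_of_nonneg_right hlb (le_of_lt (inv_pos.mpr htpos))
          _ = (γ ⬝ᵥ z)⁻¹ := one_mul _
    rw [hLHS.csInf_eq, hRHS.csInf_eq]

end AuxSpectral

section AuxBridge

variable {V : Type} [Fintype V] [LinearOrder V]

lemma aux_ind_mulVec_supported (K : SComplex V) {e : ℕ} (f : SimpIdx V e → ℝ)
    (hf : K.supportedOn f) : K.ind e *ᵥ f = f := by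
  funext σ
  rw [SComplex.ind, Matrix.mulVec_diagonal]
  by_cases hσ : (σ : Finset V) ∈ K.faces
  · rw [if_pos hσ, one_mul]
  · have h0 : f σ = 0 := by
      by_contra h
      exact hσ (hf σ h)
    rw [h0, mul_zero]

lemma aux_gbdry_supported (K : SComplex V) (d : ℕ) (f : SimpIdx V (d + 1) → ℝ)
    (hf : K.supportedOn f) : K.ind d *ᵥ (gbdry V d *ᵥ f) = gbdry V d *ᵥ f := by
  funext τ
  rw [SComplex.ind, Matrix.mulVec_diagonal]
  by_cases hτ : (τ : Finset V) ∈ K.faces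
  · rw [if_pos hτ, one_mul]
  · rw [if_neg hτ, zero_mul]
    symm
    show ∑ σ, gbdry V d τ σ * f σ = 0
    refine Finset.sum_eq_zero fun σ _ => ?_
    by_cases hfσ : f σ = 0
    · rw [hfσ, mul_zero]
    have hσK : (σ : Finset V) ∈ K.faces := hf σ hfσ
    suffices h : gbdry V d τ σ = 0 by rw [h, zero_mul]
    show ((gbdryZ V d τ σ : ℤ) : ℝ) = 0
    rw [Int.cast_eq_zero]
    show bsign (τ : Finset V) (σ : Finset V) = 0
    rw [bsign, if_neg]
    rintro ⟨hsub, -⟩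
    refine hτ (K.down_closed _ hσK _ hsub (Finset.card_pos.mp ?_))
    rw [τ.2]
    exact Nat.succ_pos d

lemma aux_bridge (K : SComplex V) (d : ℕ) (γ : SimpIdx V d → ℝ) :
    (∃ f : SimpIdx V (d + 1) → ℝ, K.supportedOn f ∧ gbdry V d *ᵥ f = γ) ↔
    (∃ f : SimpIdx V (d + 1) → ℝ, K.bdry d *ᵥ f = γ) := by
  constructor
  · rintro ⟨f, hf, hfγ⟩
    refine ⟨f, ?_⟩
    rw [SComplex.bdry, ← Matrix.mulVec_mulVec, ← Matrix.mulVec_mulVec,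
      aux_ind_mulVec_supported K f hf, aux_gbdry_supported K d f hf, hfγ]
  · rintro ⟨f, hfγ⟩
    refine ⟨K.ind (d + 1) *ᵥ f, ?_, ?_⟩
    · intro σ h
      by_contra hσ
      apply h
      rw [SComplex.ind, Matrix.mulVec_diagonal, if_neg hσ, zero_mul]
    · have hsupp : K.supportedOn (K.ind (d + 1) *ᵥ f) := by
        intro σ h
        by_contra hσ
        apply h
        rw [SComplex.ind, Matrix.mulVec_diagonal, if_neg hσ, zero_mul]
      rw [← hfγ, SComplex.bdry, ← Matrix.mulVec_mulVec, ← Matrix.mulVec_mulVec,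
        aux_gbdry_supported K d _ hsupp]

end AuxBridge

/-- **Spectral gap and effective resistance.** For a simplicial complex `K`, the
spectral gaps of the down-Laplacian on `(d+1)`-chains and of the up-Laplacian on
`d`-chains coincide and equal the minimum of the inverse effective resistances
`1/R_γ(K) = (γᵀ (L^{up})⁺ γ)⁻¹` over all unit-norm cycles `γ ∈ im ∂[K]`. -/
theorem spectral_gap_eq_min_inverse_effective_resistance
    {V : Type} [Fintype V] [LinearOrder V] (K : SComplex V) (d : ℕ)
    (X : Matrix (SimpIdx V d) (SimpIdx V d) ℝ)
    (hX : IsMoorePenrose (K.upLap d) X) :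
    specGap (K.downLap (d + 1)) = specGap (K.upLap d) ∧
    specGap (K.upLap d) =
      sInf {r : ℝ | ∃ γ : SimpIdx V d → ℝ,
        (∃ f : SimpIdx V (d + 1) → ℝ, K.supportedOn f ∧ gbdry V d *ᵥ f = γ) ∧
        γ ⬝ᵥ γ = 1 ∧ r = (γ ⬝ᵥ (X *ᵥ γ))⁻¹} := by
  have hup : K.upLap d = K.bdry d * (K.bdry d)ᵀ := rfl
  have hdown : K.downLap (d + 1) = (K.bdry d)ᵀ * K.bdry d := rfl
  constructor
  · rw [hup, hdown, specGap, specGap]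
    congr 1
    ext μ
    simp only [Set.mem_setOf_eq]
    constructor
    · rintro ⟨hμ, h⟩
      exact ⟨hμ, aux_eigen_transfer (K.bdry d) hμ h⟩
    · rintro ⟨hμ, h⟩
      refine ⟨hμ, ?_⟩
      have h' : IsEigen ((K.bdry d)ᵀᵀ * (K.bdry d)ᵀ) μ := by
        rwa [Matrix.transpose_transpose]
      have := aux_eigen_transfer ((K.bdry d)ᵀ) hμ h'
      rwa [Matrix.transpose_transpose] at this
  · rw [hup] at hX
    rw [hup, specGap]
    rw [aux_central (K.bdry d) X hX]
    congr 1
    ext r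
    simp only [Set.mem_setOf_eq]
    constructor
    · rintro ⟨γ, hγim, hγ1, hr⟩
      exact ⟨γ, (aux_bridge K d γ).mpr hγim, hγ1, hr⟩
    · rintro ⟨γ, hγim, hγ1, hr⟩
      exact ⟨γ, (aux_bridge K d γ).mp hγim, hγ1, hr⟩
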